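/- Let k ≥ 1 be a natural number and λ a nonzero complex number. The 2k×2k matrix H_{2k}(λ) is invertible and satisfies tr(H_{2k}(λ)ᵀ · H_{2k}(λ)⁻¹) = k·(λ + λ⁻¹). -/

import Mathlib

open Matrix Finset

/-- The `k×k` upper-triangular Jordan block with eigenvalue `lam`. -/
def jordanBlock (k : ℕ) (lam : ℂ) : Matrix (Fin k) (Fin k) ℂ :=
  Matrix.of fun i j => if j = i then lam else if (j : ℕ) = (i : ℕ) + 1 then 1 else 0

/-- The `2k×2k` matrix `H_{2k}(lam) = [[0, I_k],[J_k(lam), 0]]`. -/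
def Hmat (k : ℕ) (lam : ℂ) : Matrix (Fin k ⊕ Fin k) (Fin k ⊕ Fin k) ℂ :=
  Matrix.fromBlocks 0 1 (jordanBlock k lam) 0

open Matrix Finset

-- nilpotent shift powers
lemma Npow (k m : ℕ) : (jordanBlock k 0) ^ m =
    Matrix.of fun i j : Fin k => if (j : ℕ) = (i : ℕ) + m then (1:ℂ) else 0 := by
  induction m with
  | zero =>
    ext i j
    simp [Matrix.one_apply, Fin.ext_iff, eq_comm]
  | succ m ih =>
    ext i j
    rw [pow_succ, ih]
    simp only [Matrix.mul_apply, Matrix.of_apply, jordanBlock]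
    by_cases h : (i : ℕ) + m < k
    · have : ∀ l : Fin k, ((if (l : ℕ) = (i : ℕ) + m then (1:ℂ) else 0) *
          (if j = l then 0 else if (j:ℕ) = (l:ℕ) + 1 then 1 else 0)) =
          (if l = ⟨(i:ℕ)+m, h⟩ then (if j = l then 0 else if (j:ℕ) = (l:ℕ)+1 then (1:ℂ) else 0) else 0) := by
        intro l
        by_cases hl : l = ⟨(i:ℕ)+m, h⟩
        · subst hl; simp
        · have : ¬ ((l:ℕ) = (i:ℕ) + m) := by
            intro hc; exact hl (Fin.ext hc)
          simp [this, hl]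
      rw [Finset.sum_congr rfl fun l _ => this l, Finset.sum_ite_eq' _ _ _]
      simp only [Finset.mem_univ, if_true]
      have hj : ((⟨(i:ℕ)+m, h⟩ : Fin k) : ℕ) = (i:ℕ) + m := rfl
      by_cases hje : j = (⟨(i:ℕ)+m, h⟩ : Fin k)
      · have : (j : ℕ) = (i:ℕ) + m := by rw [hje]
        simp [hje, this]
      · have hjv : (j : ℕ) ≠ (i:ℕ) + m := fun hc => hje (Fin.ext hc)
        simp only [hje, if_false, hj]
        split_ifs <;> first | rfl | omega
    · have hj : ¬ ((j:ℕ) = (i:ℕ) + (m+1)) := by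
        have := j.isLt; omega
      rw [if_neg (by omega)]
      apply Finset.sum_eq_zero
      intro l _
      have : ¬ ((l:ℕ) = (i:ℕ) + m) := by have := l.isLt; omega
      simp [this]

lemma Npow_k (k : ℕ) : (jordanBlock k 0) ^ k = 0 := by
  rw [Npow]
  ext i j
  have := j.isLt
  have : ¬ ((j:ℕ) = (i:ℕ) + k) := by omega
  simp [this]

lemma trace_Npow (k m : ℕ) (hm : 1 ≤ m) : ((jordanBlock k 0) ^ m).trace = 0 := by
  rw [Npow, Matrix.trace]
  apply Finset.sum_eq_zero
  intro i _
  have : ¬ ((i:ℕ) = (i:ℕ) + m) := by omega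
  simp [Matrix.diag, this]; omega

lemma J_decomp (k : ℕ) (lam : ℂ) (hlam : lam ≠ 0) :
    jordanBlock k lam = lam • (1 - (-lam⁻¹) • jordanBlock k 0) := by
  ext i j
  simp only [jordanBlock, Matrix.smul_apply, Matrix.sub_apply, Matrix.one_apply,
    Matrix.of_apply, smul_eq_mul, neg_smul]
  by_cases h1 : j = i
  · subst h1; simp
  · have h2 : ¬ (i = j) := fun hc => h1 hc.symm
    by_cases h3 : (j:ℕ) = (i:ℕ) + 1 <;>
      simp [h1, h2, h3, mul_inv_cancel₀ hlam]

noncomputable def Jinv (k : ℕ) (lam : ℂ) : Matrix (Fin k) (Fin k) ℂ :=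
  lam⁻¹ • ∑ i ∈ Finset.range k, ((-lam⁻¹) • jordanBlock k 0) ^ i

lemma J_mul_Jinv (k : ℕ) (lam : ℂ) (hlam : lam ≠ 0) :
    jordanBlock k lam * Jinv k lam = 1 := by
  set x := (-lam⁻¹) • jordanBlock k 0 with hx
  have hxk : x ^ k = 0 := by
    rw [hx, smul_pow, Npow_k]; simp
  rw [J_decomp k lam hlam, Jinv, Matrix.smul_mul, Matrix.mul_smul, smul_smul,
    mul_inv_cancel₀ hlam, one_smul]
  have : (1 - x) * ∑ i ∈ Finset.range k, x ^ i = 1 := by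
    have := mul_geom_sum x k
    have h2 : (1 - x) * ∑ i ∈ Finset.range k, x ^ i
        = -((x - 1) * ∑ i ∈ Finset.range k, x ^ i) := by rw [← neg_sub x 1, neg_mul]
    rw [h2, this, hxk]; simp
  exact this


lemma trace_fromBlocks' {n : ℕ} (A B C D : Matrix (Fin n) (Fin n) ℂ) :
    (Matrix.fromBlocks A B C D).trace = A.trace + D.trace := by
  simp [Matrix.trace, Matrix.diag, Fintype.sum_sum_type, Matrix.fromBlocks]

lemma trace_J (k : ℕ) (lam : ℂ) : (jordanBlock k lam).trace = (k : ℂ) * lam := by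
  simp [Matrix.trace, Matrix.diag, jordanBlock]

lemma trace_Jinv (k : ℕ) (hk : 1 ≤ k) (lam : ℂ) :
    (Jinv k lam).trace = (k : ℂ) * lam⁻¹ := by
  rw [Jinv, Matrix.trace_smul, Matrix.trace_sum]
  have : ∀ i ∈ Finset.range k,
      (((-lam⁻¹) • jordanBlock k 0) ^ i).trace = if i = 0 then (k : ℂ) else 0 := by
    intro i _
    rcases Nat.eq_zero_or_pos i with h | h
    · simp [h]
    · rw [if_neg (by omega), smul_pow, Matrix.trace_smul, trace_Npow k i h, smul_zero]
  rw [Finset.sum_congr rfl this, Finset.sum_ite_eq' _ 0,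
    if_pos (Finset.mem_range.mpr hk)]
  simp [mul_comm]


/-- For `k ≥ 1` and nonzero `lam : ℂ`, the matrix `H_{2k}(lam)` is invertible and
`tr(H_{2k}(lam)ᵀ * H_{2k}(lam)⁻¹) = k * (lam + lam⁻¹)`. -/
theorem Hmat_isUnit_and_trace (k : ℕ) (hk : 1 ≤ k) (lam : ℂ) (hlam : lam ≠ 0) :
    IsUnit (Hmat k lam) ∧
      ((Hmat k lam)ᵀ * (Hmat k lam)⁻¹).trace = (k : ℂ) * (lam + lam⁻¹) := by
  set B : Matrix (Fin k ⊕ Fin k) (Fin k ⊕ Fin k) ℂ :=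
    Matrix.fromBlocks 0 (Jinv k lam) 1 0 with hB
  have hHB : Hmat k lam * B = 1 := by
    rw [Hmat, hB, Matrix.fromBlocks_multiply]
    simp [J_mul_Jinv k lam hlam, ← Matrix.fromBlocks_one]
  have hBH : B * Hmat k lam = 1 := mul_eq_one_comm.mp hHB
  refine ⟨⟨⟨Hmat k lam, B, hHB, hBH⟩, rfl⟩, ?_⟩
  rw [Matrix.inv_eq_right_inv hHB, Hmat, Matrix.fromBlocks_transpose, hB,
    Matrix.fromBlocks_multiply]
  simp only [Matrix.transpose_zero, Matrix.transpose_one, Matrix.mul_zero,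
    Matrix.mul_one, Matrix.zero_mul, Matrix.one_mul, add_zero, zero_add]
  rw [trace_fromBlocks', Matrix.trace_transpose, trace_J, trace_Jinv k hk]
  ring
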